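/- Let M be a matroid on a finite nonempty ground set E with c(M) 2-connected components, where the 2-connected components are the equivalence classes of the relation on E generated by: e ∼ f if e = f or some circuit of M contains both e and f. Then the base polytope P_M has dimension |E| − c(M) (the dimension of its affine hull). In particular, if M is 2-connected then dim(P_M) = |E| − 1. -/

import Mathlib

open Set

/-- A circuit of a matroid: a minimal dependent set. -/
def IsCircuit {α : Type*} (M : Matroid α) (C : Set α) : Prop :=
  M.Dep C ∧ ∀ D ⊂ C, ¬ M.Dep D

/-- Matroid isomorphism: a bijection carrying the ground set onto the ground set and
the circuits exactly onto the circuits. -/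
def MatroidIso {α β : Type*} (M : Matroid α) (N : Matroid β) : Prop :=
  ∃ φ : α ≃ β, φ '' M.E = N.E ∧ ∀ C ⊆ M.E, (IsCircuit M C ↔ IsCircuit N (φ '' C))

/-- The rank of a set in a matroid: the largest cardinality of an independent subset. -/
noncomputable def mrank {α : Type*} (M : Matroid α) (X : Set α) : ℕ :=
  sSup {n | ∃ I, I ⊆ X ∧ M.Indep I ∧ I.ncard = n}

/-- A matroid is 2-connected if no proper nonempty subset `T` of the ground set satisfies
`rank T + rank (E \ T) = rank E`. -/
def TwoConnected {α : Type*} (M : Matroid α) : Prop :=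
  ∀ T ⊆ M.E, T.Nonempty → T ≠ M.E → mrank M T + mrank M (M.E \ T) ≠ mrank M M.E
/-- The base polytope of a matroid on the ground type `α`: the convex hull in `ℝ^α` of the
characteristic vectors of the bases. -/
noncomputable def basePolytope {α : Type*} (M : Matroid α) : Set (α → ℝ) :=
  convexHull ℝ {x | ∃ B, M.IsBase B ∧ x = B.indicator fun _ => (1 : ℝ)}

/-- The number of 2-connected components of a matroid: the number of equivalence classes
of the equivalence relation on the ground set generated by `e ∼ f` iff `e = f` or some
circuit contains both `e` and `f`. -/
noncomputable def numComponents {α : Type*} (M : Matroid α) : ℕ :=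
  Nat.card (Quot (fun e f : α => e = f ∨ ∃ C, IsCircuit M C ∧ e ∈ C ∧ f ∈ C))

set_option linter.unusedSectionVars false

variable {α : Type} [Fintype α] {M : Matroid α} {C D T B I J : Set α} {e f : α}

lemma dep_has_circuit (hD : M.Dep D) : ∃ C ⊆ D, IsCircuit M C := by
  obtain ⟨C, ⟨hCD, hCdep⟩, hmin⟩ := Set.exists_min_image {C | C ⊆ D ∧ M.Dep C}
    Set.ncard {C | C ⊆ D ∧ M.Dep C}.toFinite ⟨D, Subset.rfl, hD⟩
  refine ⟨C, hCD, hCdep, fun D' hss hdep => ?_⟩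
  have := hmin D' ⟨hss.subset.trans hCD, hdep⟩
  exact absurd this (not_le.mpr (Set.ncard_lt_ncard hss C.toFinite))

lemma circuit_diff_indep (hE : M.E = univ) (hC : IsCircuit M C) (he : e ∈ C) :
    M.Indep (C \ {e}) := by
  have h := hC.2 (C \ {e}) (Set.sdiff_singleton_ssubset.mpr he)
  exact M.indep_of_not_dep h (by simp [hE])

lemma circuit_mem_closure_diff (hE : M.E = univ) (hC : IsCircuit M C) (he : e ∈ C) :
    e ∈ M.closure (C \ {e}) := by
  have hind := circuit_diff_indep hE hC he
  have : M.Dep (insert e (C \ {e})) := by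
    rw [Set.insert_diff_singleton, Set.insert_eq_of_mem he]; exact hC.1
  exact ((hind.insert_dep_iff).mp this).1

set_option linter.unusedSectionVars false

lemma exchange_lemma (hE : M.E = univ) (hC : IsCircuit M C) (he : e ∈ C) (hf : f ∈ C)
    (hef : e ≠ f) :
    ∃ B, M.IsBase B ∧ M.IsBase (insert f (B \ {e})) ∧ e ∈ B ∧ f ∉ B := by
  have hCf : M.Indep (C \ {f}) := circuit_diff_indep hE hC hf
  obtain ⟨B, hB, hCB⟩ := hCf.exists_isBase_superset
  have heB : e ∈ B := hCB ⟨he, hef⟩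
  have hfB : f ∉ B := by
    intro hfB
    exact hC.1.not_indep (hB.indep.subset (fun x hx => by
      by_cases hxf : x = f
      · exact hxf ▸ hfB
      · exact hCB ⟨hx, hxf⟩))
  have hBe : M.Indep (B \ {e}) := hB.indep.subset diff_subset
  have hind : M.Indep (insert f (B \ {e})) := by
    by_contra hdep
    have hdep' : M.Dep (insert f (B \ {e})) := by
      exact (M.not_indep_iff (by simp [hE])).mp hdep
    have hfcl : f ∈ M.closure (B \ {e}) := (hBe.insert_dep_iff.mp hdep').1
    have hecl : e ∈ M.closure (B \ {e}) := by
      have h1 : e ∈ M.closure (C \ {e}) := circuit_mem_closure_diff hE hC he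
      have h2 : C \ {e} ⊆ insert f (B \ {e}) := by
        intro x hx
        by_cases hxf : x = f
        · exact hxf ▸ mem_insert _ _
        · exact mem_insert_of_mem _ ⟨hCB ⟨hx.1, hxf⟩, hx.2⟩
      have h3 : M.closure (insert f (B \ {e})) = M.closure (B \ {e}) :=
        M.closure_insert_eq_of_mem_closure hfcl
      exact h3 ▸ (M.closure_subset_closure h2 h1)
    exact (M.indep_iff_forall_notMem_closure_sdiff (by simp [hE])).mp hB.indep heB hecl
  exact ⟨B, hB, hB.exchange_isBase_of_indep hfB hind, heB, hfB⟩
/-- property that no circuit crosses T -/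
def NoCross (M : Matroid α) (T : Set α) : Prop :=
  ∀ C, IsCircuit M C → C ⊆ T ∨ Disjoint C T

lemma base_inter_basis (hE : M.E = univ) (hT : NoCross M T) (hB : M.IsBase B) :
    M.IsBasis (B ∩ T) T := by
  refine (hB.indep.subset inter_subset_left).isBasis_of_subset_of_subset_closure
    inter_subset_right (fun x hx => ?_)
  by_cases hxB : x ∈ B
  · exact M.subset_closure (B ∩ T) (by simp [hE]) ⟨hxB, hx⟩
  · have hdep : M.Dep (insert x B) := hB.insert_dep ⟨by simp [hE], hxB⟩
    obtain ⟨C, hCsub, hC⟩ := dep_has_circuit hdep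
    have hxC : x ∈ C := by
      by_contra hxC
      exact hC.1.not_indep (hB.indep.subset (fun y hy =>
        ((hCsub hy).resolve_left (fun h => hxC (h ▸ hy)))))
    have hCT : C ⊆ T := (hT C hC).resolve_right
      (fun hdis => (hdis.ne_of_mem hxC hx) rfl)
    have hsub : C \ {x} ⊆ B ∩ T := fun y hy =>
      ⟨((hCsub hy.1).resolve_left hy.2), hCT hy.1⟩
    exact M.closure_subset_closure hsub (circuit_mem_closure_diff hE hC hxC)

lemma union_basis (hE : M.E = univ) (hT : NoCross M T) (hI : M.IsBasis I T)
    (hJ : M.IsBasis J Tᶜ) : M.IsBase (I ∪ J) := by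
  have hind : M.Indep (I ∪ J) := by
    by_contra hdep
    obtain ⟨C, hCsub, hC⟩ := dep_has_circuit ((M.not_indep_iff (by simp [hE])).mp hdep)
    rcases hT C hC with hCT | hdis
    · exact hC.1.not_indep (hI.indep.subset (fun y hy => by
        rcases hCsub hy with h | h
        · exact h
        · exact absurd (hJ.subset h) (notMem_compl_iff.mpr (hCT hy) : _)))
    · exact hC.1.not_indep (hJ.indep.subset (fun y hy => by
        rcases hCsub hy with h | h
        · exact absurd (hI.subset h) (hdis.ne_of_mem hy · rfl)
        · exact h))
  have := hI.union_isBasis_union hJ hind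
  rw [union_compl_self] at this
  exact Matroid.isBasis_ground_iff.mp (by rwa [hE] : M.IsBasis (I ∪ J) M.E)

lemma basis_ncard_eq (hI : M.IsBasis I T) (hJ : M.IsBasis J T) : I.ncard = J.ncard :=
  hI.isBase_restrict.ncard_eq_ncard_of_isBase hJ.isBase_restrict

lemma mrank_eq_ncard_of_basis {X : Set α} (hI : M.IsBasis I X) : mrank M X = I.ncard := by
  unfold mrank
  apply le_antisymm
  · refine csSup_le ⟨0, Set.mem_setOf.mpr ⟨∅, empty_subset _, M.empty_indep, by simp⟩⟩ ?_
    rintro n ⟨J, hJX, hJind, rfl⟩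
    by_contra hlt
    push_neg at hlt
    have hcard : I.encard < J.encard := by
      rw [← I.toFinite.cast_ncard_eq, ← J.toFinite.cast_ncard_eq]
      exact_mod_cast hlt
    obtain ⟨x, hx, hind⟩ := hI.indep.augment hJind hcard
    exact hind.not_dep (hI.insert_dep ⟨hJX hx.1, hx.2⟩)
  · exact le_csSup ⟨Fintype.card α, by
      rintro n ⟨J, _, _, rfl⟩
      simpa [Set.ncard_univ] using Set.ncard_le_ncard (subset_univ J) univ.toFinite⟩
      ⟨I, hI.subset, hI.indep, rfl⟩

lemma mrank_add_eq (hE : M.E = univ) (hT : NoCross M T) :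
    mrank M T + mrank M (univ \ T) = mrank M univ := by
  obtain ⟨I, hI⟩ := M.exists_isBasis T (by simp [hE])
  obtain ⟨J, hJ⟩ := M.exists_isBasis Tᶜ (by simp [hE])
  have hbase := union_basis hE hT hI hJ
  have hdisj : Disjoint I J := Set.disjoint_of_subset hI.subset hJ.subset disjoint_compl_right
  rw [← Set.compl_eq_univ_diff, mrank_eq_ncard_of_basis hI, mrank_eq_ncard_of_basis hJ,
    mrank_eq_ncard_of_basis (hE ▸ Matroid.isBasis_ground_iff.mpr hbase : M.IsBasis (I ∪ J) univ),
    Set.ncard_union_eq hdisj I.toFinite J.toFinite]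
def mrel {α : Type*} (M : Matroid α) : α → α → Prop :=
  fun e f => e = f ∨ ∃ C, IsCircuit M C ∧ e ∈ C ∧ f ∈ C

def baseVecs {α : Type*} (M : Matroid α) : Set (α → ℝ) :=
  {x | ∃ B, M.IsBase B ∧ x = B.indicator fun _ => (1 : ℝ)}

lemma single_sub_single_mem [DecidableEq α] (hE : M.E = univ)
    (h : Quot.mk (mrel M) e = Quot.mk (mrel M) f) :
    Pi.single e (1:ℝ) - Pi.single f 1 ∈ vectorSpan ℝ (baseVecs M) := by
  classical
  have hgen := Quot.eqvGen_exact h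
  clear h
  induction hgen with
  | rel x y hxy =>
    rcases hxy with rfl | ⟨C, hC, hxC, hyC⟩
    · simp
    by_cases hxy' : x = y
    · simp [hxy']
    obtain ⟨B, hB, hB', hxB, hyB⟩ := exchange_lemma hE hC hxC hyC hxy'
    have hmem1 : Set.indicator B (fun _ => (1:ℝ)) ∈ baseVecs M := ⟨B, hB, rfl⟩
    have hmem2 : Set.indicator (insert y (B \ {x})) (fun _ => (1:ℝ)) ∈ baseVecs M :=
      ⟨_, hB', rfl⟩
    have hv := vsub_mem_vectorSpan ℝ hmem1 hmem2
    rw [vsub_eq_sub] at hv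
    convert hv using 1
    funext z
    simp only [Pi.sub_apply, Pi.single_apply, Set.indicator_apply]
    by_cases hzx : z = x
    · have hz' : x ∉ insert y (B \ {x}) := by simp [hxy']
      simp [hzx, hxy', hxB, hz']
    · by_cases hzy : z = y
      · have hz' : y ∈ insert y (B \ {x}) := mem_insert _ _
        simp [hzy, (show ¬ y = x from fun h => hxy' h.symm), hyB, hz']
      · have hiff : z ∈ B ↔ z ∈ insert y (B \ {x}) := by
          simp [Set.mem_insert_iff, hzy, hzx]
        have heq : (if z ∈ B then (1:ℝ) else 0) = (if z ∈ insert y (B \ {x}) then (1:ℝ) else 0) := by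
          by_cases hzB : z ∈ B
          · rw [if_pos hzB, if_pos (hiff.mp hzB)]
          · rw [if_neg hzB, if_neg (fun h => hzB (hiff.mpr h))]
        rw [if_neg hzx, if_neg hzy, heq, sub_self, sub_self]
  | refl x => simp
  | symm x y _ ih =>
    have := Submodule.neg_mem _ ih
    rwa [neg_sub] at this
  | trans x y z _ _ ih1 ih2 =>
    have := Submodule.add_mem _ ih1 ih2
    rwa [sub_add_sub_cancel] at this

lemma numComponents_eq {α : Type*} (M : Matroid α) :
    numComponents M = Nat.card (Quot (mrel M)) := rfl
/-- The base polytope of a matroid on a nonempty finite ground set `E` has dimension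
`|E| - c(M)`, where `c(M)` is the number of 2-connected components. In particular, for a
2-connected matroid the dimension is `|E| - 1`. -/
theorem basePolytope_dim {α : Type} [Fintype α] [Nonempty α]
    (M : Matroid α) (hE : M.E = Set.univ) :
    Module.finrank ℝ (vectorSpan ℝ (basePolytope M)) = Fintype.card α - numComponents M ∧
    (TwoConnected M →
      Module.finrank ℝ (vectorSpan ℝ (basePolytope M)) = Fintype.card α - 1) := by
  classical
  haveI : Finite (Quot (mrel M)) :=
    Finite.of_surjective (Quot.mk (mrel M)) Quot.mk_surjective
  haveI : Fintype (Quot (mrel M)) := Fintype.ofFinite _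
  let L : (α → ℝ) →ₗ[ℝ] (Quot (mrel M) → ℝ) :=
    { toFun := fun v c => ∑ e, if Quot.mk (mrel M) e = c then v e else 0
      map_add' := by
        intro v w; funext c
        simp only [Pi.add_apply]
        rw [← Finset.sum_add_distrib]
        exact Finset.sum_congr rfl fun e _ => by split <;> simp
      map_smul' := by
        intro a v; funext c
        simp only [Pi.smul_apply, smul_eq_mul, RingHom.id_apply]
        rw [Finset.mul_sum]
        exact Finset.sum_congr rfl fun e _ => by split <;> simp }
  have hLapply : ∀ v c, L v c = ∑ e, if Quot.mk (mrel M) e = c then v e else 0 :=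
    fun v c => rfl
  have hNC : ∀ c : Quot (mrel M), NoCross M (Quot.mk (mrel M) ⁻¹' {c}) := by
    intro c C hC
    by_cases h : ∃ x ∈ C, Quot.mk (mrel M) x = c
    · obtain ⟨x, hxC, hxc⟩ := h
      left
      intro y hyC
      have hq : Quot.mk (mrel M) y = Quot.mk (mrel M) x :=
        Quot.sound (Or.inr ⟨C, hC, hyC, hxC⟩)
      simp only [Set.mem_preimage, Set.mem_singleton_iff]
      rw [hq, hxc]
    · right
      rw [Set.disjoint_left]
      intro y hy hy'
      exact h ⟨y, hy, hy'⟩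
  have hLbase : ∀ B, M.IsBase B → ∀ c,
      L (B.indicator fun _ => (1:ℝ)) c = ((B ∩ Quot.mk (mrel M) ⁻¹' {c}).ncard : ℝ) := by
    intro B hB c
    rw [hLapply]
    have h1 : ∀ e : α, (if Quot.mk (mrel M) e = c then (B.indicator fun _ => (1:ℝ)) e else 0)
        = if e ∈ B ∩ Quot.mk (mrel M) ⁻¹' {c} then (1:ℝ) else 0 := by
      intro e
      by_cases h1 : Quot.mk (mrel M) e = c <;> by_cases h2 : e ∈ B <;>
        simp [Set.indicator_apply, h1, h2, Set.mem_preimage]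
    rw [Finset.sum_congr rfl fun e _ => h1 e, Finset.sum_boole]
    congr 1
    rw [Set.ncard_eq_toFinset_card']
    congr 1
    ext e
    simp
  have hLconst : ∀ B B', M.IsBase B → M.IsBase B' →
      L (B.indicator fun _ => (1:ℝ)) = L (B'.indicator fun _ => (1:ℝ)) := by
    intro B B' hB hB'
    funext c
    rw [hLbase B hB c, hLbase B' hB' c]
    norm_cast
    exact basis_ncard_eq (base_inter_basis hE (hNC c) hB) (base_inter_basis hE (hNC c) hB')
  have hspan : vectorSpan ℝ (basePolytope M) = vectorSpan ℝ (baseVecs M) := by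
    have h0 : basePolytope M = convexHull ℝ (baseVecs M) := rfl
    rw [← direction_affineSpan, ← direction_affineSpan, h0, affineSpan_convexHull]
  have hker : vectorSpan ℝ (baseVecs M) = LinearMap.ker L := by
    apply le_antisymm
    · rw [vectorSpan_def, Submodule.span_le]
      rintro v hv
      obtain ⟨x, hx, y, hy, rfl⟩ := hv
      obtain ⟨B, hB, rfl⟩ := hx
      obtain ⟨B', hB', rfl⟩ := hy
      simp only [SetLike.mem_coe, LinearMap.mem_ker, vsub_eq_sub, map_sub]
      rw [hLconst B B' hB hB', sub_self]
    · intro v hv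
      replace hv : L v = 0 := hv
      have hrep : v = ∑ e, v e •
          (Pi.single e (1:ℝ) - Pi.single (Quot.out (Quot.mk (mrel M) e)) 1) := by
        funext x
        simp only [Finset.sum_apply, Pi.smul_apply, Pi.sub_apply, smul_eq_mul, mul_sub]
        rw [Finset.sum_sub_distrib]
        have hA : (∑ e, v e * (Pi.single e (1:ℝ) : α → ℝ) x) = v x := by
          have h : ∀ e : α, v e * (Pi.single e (1:ℝ) : α → ℝ) x = if x = e then v e else 0 := by
            intro e; rw [Pi.single_apply]; split <;> simp
          rw [Finset.sum_congr rfl fun e _ => h e, Finset.sum_ite_eq]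
          simp
        have hB0 : (∑ e, v e * (Pi.single (Quot.out (Quot.mk (mrel M) e)) (1:ℝ) : α → ℝ) x) = 0 := by
          have hc : ∀ e : α, v e * (Pi.single (Quot.out (Quot.mk (mrel M) e)) (1:ℝ) : α → ℝ) x
              = if x = Quot.out (Quot.mk (mrel M) x) then
                  (if Quot.mk (mrel M) e = Quot.mk (mrel M) x then v e else 0) else 0 := by
            intro e
            rw [Pi.single_apply]
            by_cases h2 : Quot.mk (mrel M) e = Quot.mk (mrel M) x
            · by_cases h1 : x = Quot.out (Quot.mk (mrel M) x)
              · rw [if_pos h1, if_pos h2, if_pos (by rw [h2]; exact h1), mul_one]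
              · rw [if_neg h1, if_neg (fun h => h1 (h.trans (congrArg Quot.out h2))),
                  mul_zero]
            · have hcond : ¬ (x = Quot.out (Quot.mk (mrel M) e)) := fun h =>
                h2 ((show Quot.mk (mrel M) x = Quot.mk (mrel M) e by
                  rw [h]; exact Quot.out_eq _).symm)
              rw [if_neg hcond, mul_zero]
              by_cases h1 : x = Quot.out (Quot.mk (mrel M) x)
              · rw [if_pos h1, if_neg h2]
              · rw [if_neg h1]
          rw [Finset.sum_congr rfl fun e _ => hc e]
          by_cases h1 : x = Quot.out (Quot.mk (mrel M) x)
          · simp only [if_pos h1]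
            have h0 := congrFun hv (Quot.mk (mrel M) x)
            rw [hLapply] at h0
            simpa using h0
          · simp [h1]
        rw [hA, hB0, sub_zero]
      rw [hrep]
      exact Submodule.sum_mem _ fun e _ => Submodule.smul_mem _ _
        (single_sub_single_mem hE (Quot.out_eq _).symm)
  have hsurj : Function.Surjective L := by
    intro w
    refine ⟨fun e => if Quot.out (Quot.mk (mrel M) e) = e then w (Quot.mk (mrel M) e) else 0,
      funext fun c => ?_⟩
    rw [hLapply, Finset.sum_eq_single (Quot.out c)]
    · have h0 : Quot.mk (mrel M) (Quot.out c) = c := Quot.out_eq c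
      rw [if_pos h0, if_pos (congrArg Quot.out h0), h0]
    · intro e _ hne
      by_cases h1 : Quot.mk (mrel M) e = c
      · rw [if_pos h1, if_neg (fun h => hne (h.symm.trans (congrArg Quot.out h1)))]
      · rw [if_neg h1]
    · intro h; exact absurd (Finset.mem_univ _) h
  have hrn := LinearMap.finrank_range_add_finrank_ker L
  rw [LinearMap.range_eq_top.mpr hsurj, finrank_top, Module.finrank_fintype_fun_eq_card,
    Module.finrank_fintype_fun_eq_card] at hrn
  have hmain : Module.finrank ℝ (vectorSpan ℝ (basePolytope M))
      = Fintype.card α - numComponents M := by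
    rw [hspan, hker, numComponents_eq, Nat.card_eq_fintype_card]
    omega
  refine ⟨hmain, fun hTC => ?_⟩
  have hsub : Subsingleton (Quot (mrel M)) := by
    constructor
    intro c c'
    obtain ⟨a, rfl⟩ := Quot.exists_rep c
    obtain ⟨b, rfl⟩ := Quot.exists_rep c'
    by_contra hne
    have hTE : (Quot.mk (mrel M) ⁻¹' {Quot.mk (mrel M) a} : Set α) ⊆ M.E := by
      rw [hE]; exact subset_univ _
    have hTneq : (Quot.mk (mrel M) ⁻¹' {Quot.mk (mrel M) a} : Set α) ≠ M.E := by
      rw [hE]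
      intro h
      have hb : b ∈ (Quot.mk (mrel M) ⁻¹' {Quot.mk (mrel M) a} : Set α) := h ▸ mem_univ b
      exact hne ((Set.mem_preimage.mp hb : Quot.mk (mrel M) b = _).symm)
    exact hTC _ hTE ⟨a, rfl⟩ hTneq
      (by rw [hE]; exact mrank_add_eq hE (hNC (Quot.mk (mrel M) a)))
  have h1 : numComponents M = 1 := by
    rw [numComponents_eq]
    exact Nat.card_eq_one_iff_unique.mpr ⟨hsub, ⟨Quot.mk _ (Classical.arbitrary α)⟩⟩
  rw [hmain, h1]
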